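/- arXiv:1105.0489 — 3 statements merged into one kernel-verified Lean document; each statement's English description precedes it below -/
import Mathlib

section
/- Let (A_n)_{n≥1} and (L_n)_{n≥0} be sequences in a (possibly noncommutative) ℚ-algebra related by the recursion L_n = A_{n+1} + ∑_{ℓ=1}^{n} (B_ℓ/ℓ!) ∑_{n_1+⋯+n_ℓ+n_{ℓ+1} = n-ℓ} L_{n_1}⋯L_{n_ℓ} A_{n_{ℓ+1}+1}, where B_ℓ are Bernoulli numbers. Then the inverse relation A_n = ∑_{ℓ=1}^{n} (1/ℓ!) ∑_{n_1+⋯+n_ℓ = n-ℓ} L_{n_1}⋯L_{n_ℓ} holds for all n ≥ 1. -/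
open PowerSeries Finset

namespace Stmt1Aux

lemma sum_adT_succ {M : Type*} [AddCommMonoid M] (k n : ℕ)
    (f : (Fin (k + 1) → ℕ) → M) :
    ∑ t ∈ Finset.Nat.antidiagonalTuple (k + 1) n, f t
      = ∑ p ∈ Finset.HasAntidiagonal.antidiagonal n, ∑ s ∈ Finset.Nat.antidiagonalTuple k p.2,
          f (Fin.cons p.1 s) := by
  rw [Finset.sum_sigma']
  refine Finset.sum_nbij'
    (fun x : Fin (k + 1) → ℕ =>
      (⟨(x 0, ∑ i, x (Fin.succ i)), Fin.tail x⟩ : (p : ℕ × ℕ) × (Fin k → ℕ)))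
    (fun y => Fin.cons y.1.1 y.2) ?_ ?_ ?_ ?_ ?_
  · intro x hx
    have hsum : ∑ i, x i = n := Finset.Nat.mem_antidiagonalTuple.mp hx
    rw [Fin.sum_univ_succ] at hsum
    refine Finset.mem_sigma.mpr ⟨Finset.HasAntidiagonal.mem_antidiagonal.mpr hsum, ?_⟩
    exact Finset.Nat.mem_antidiagonalTuple.mpr rfl
  · rintro ⟨⟨a, b⟩, s⟩ hy
    obtain ⟨h1, h2⟩ := Finset.mem_sigma.mp hy
    have hb : ∑ i, s i = b := Finset.Nat.mem_antidiagonalTuple.mp h2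
    have ha : a + b = n := Finset.HasAntidiagonal.mem_antidiagonal.mp h1
    refine Finset.Nat.mem_antidiagonalTuple.mpr ?_
    rw [Fin.sum_cons, hb, ha]
  · intro x _
    exact Fin.cons_self_tail x
  · rintro ⟨⟨a, b⟩, s⟩ hy
    obtain ⟨h1, h2⟩ := Finset.mem_sigma.mp hy
    have hb : ∑ i, s i = b := Finset.Nat.mem_antidiagonalTuple.mp h2
    subst hb
    simp [Fin.tail_cons]
  · intro x _
    rw [Fin.cons_self_tail]

variable {R : Type*} [Ring R]

lemma coeff_mk_pow (L : ℕ → R) (ℓ n : ℕ) :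
    (coeff (R := R) n) ((mk L) ^ ℓ)
      = ∑ t ∈ Finset.Nat.antidiagonalTuple ℓ n, (List.ofFn fun i : Fin ℓ => L (t i)).prod := by
  induction ℓ generalizing n with
  | zero =>
    cases n with
    | zero => simp
    | succ m => simp [coeff_one]
  | succ k ih =>
    rw [pow_succ', coeff_mul, sum_adT_succ]
    refine Finset.sum_congr rfl fun p hp => ?_
    rw [coeff_mk, ih, Finset.mul_sum]
    refine Finset.sum_congr rfl fun s hs => ?_
    rw [List.ofFn_succ]
    simp [Fin.cons_zero, Fin.cons_succ]

lemma coeff_mk_pow_mul (L g : ℕ → R) (ℓ n : ℕ) :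
    (coeff (R := R) n) ((mk L) ^ ℓ * mk g)
      = ∑ t ∈ Finset.Nat.antidiagonalTuple (ℓ + 1) n,
          (List.ofFn fun i : Fin ℓ => L (t i.castSucc)).prod * g (t (Fin.last ℓ)) := by
  induction ℓ generalizing n with
  | zero => simp
  | succ k ih =>
    rw [pow_succ', mul_assoc, coeff_mul, sum_adT_succ]
    refine Finset.sum_congr rfl fun p hp => ?_
    rw [coeff_mk, ih, Finset.mul_sum]
    refine Finset.sum_congr rfl fun s hs => ?_
    rw [List.ofFn_succ, ← mul_assoc]
    have hlast : Fin.cons (α := fun _ => ℕ) p.1 s (Fin.last (k + 1)) = s (Fin.last k) := by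
      rw [← Fin.succ_last, Fin.cons_succ]
    rw [hlast, List.prod_cons]
    congr 2


variable {R : Type*} [Ring R] [Algebra ℚ R]

/-- "Substitution" of `u = X * mk L` into the series with rational coefficients `c`. -/
noncomputable def Sop (L : ℕ → R) (c : ℕ → ℚ) : R⟦X⟧ :=
  PowerSeries.mk fun n => ∑ ℓ ∈ range (n + 1), c ℓ • (coeff n) ((X * PowerSeries.mk L) ^ ℓ)

lemma coeff_u_pow_eq_zero (L : ℕ → R) {ℓ n : ℕ} (h : n < ℓ) :
    (coeff n) ((X * PowerSeries.mk L) ^ ℓ) = 0 := by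
  have hcomm : (X * PowerSeries.mk L) ^ ℓ = X ^ ℓ * (PowerSeries.mk L) ^ ℓ :=
    ((commute_X (PowerSeries.mk L)).symm).mul_pow ℓ
  exact X_pow_dvd_iff.mp ⟨(PowerSeries.mk L) ^ ℓ, hcomm⟩ n h

lemma coeff_Sop (L : ℕ → R) (c : ℕ → ℚ) {n N : ℕ} (h : n < N) :
    (coeff n) (Sop L c) = ∑ ℓ ∈ range N, c ℓ • (coeff n) ((X * PowerSeries.mk L) ^ ℓ) := by
  rw [Sop, coeff_mk]
  refine Finset.sum_subset (Finset.range_subset_range.mpr h) fun ℓ _ hℓ => ?_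
  rw [coeff_u_pow_eq_zero L (by simpa using hℓ), smul_zero]

lemma Sop_mul_Sop (L : ℕ → R) (c d : ℕ → ℚ) :
    Sop L c * Sop L d = Sop L fun m => ∑ p ∈ antidiagonal m, c p.1 * d p.2 := by
  ext n
  set u := X * PowerSeries.mk L with hu
  rw [coeff_mul]
  have step1 : ∑ p ∈ antidiagonal n, (coeff p.1) (Sop L c) * (coeff p.2) (Sop L d)
      = ∑ a ∈ range (n + 1), ∑ b ∈ range (n + 1),
          (c a * d b) • (coeff n) (u ^ (a + b)) := by
    have : ∀ p ∈ antidiagonal n, (coeff p.1) (Sop L c) * (coeff p.2) (Sop L d)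
        = ∑ a ∈ range (n + 1), ∑ b ∈ range (n + 1),
            (c a * d b) • ((coeff p.1) (u ^ a) * (coeff p.2) (u ^ b)) := by
      intro p hp
      have h1 : p.1 < n + 1 := by
        have := Finset.HasAntidiagonal.mem_antidiagonal.mp hp; omega
      have h2 : p.2 < n + 1 := by
        have := Finset.HasAntidiagonal.mem_antidiagonal.mp hp; omega
      rw [coeff_Sop L c h1, coeff_Sop L d h2, Finset.sum_mul]
      refine Finset.sum_congr rfl fun a _ => ?_
      rw [Finset.mul_sum]
      refine Finset.sum_congr rfl fun b _ => ?_
      rw [smul_mul_assoc, mul_smul_comm, smul_smul]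
    rw [Finset.sum_congr rfl this, Finset.sum_comm]
    refine Finset.sum_congr rfl fun a _ => ?_
    rw [Finset.sum_comm]
    refine Finset.sum_congr rfl fun b _ => ?_
    rw [← Finset.smul_sum, ← coeff_mul, ← pow_add]
  rw [step1]
  rw [coeff_Sop L _ (Nat.lt_succ_self n)]
  have step2 : ∀ m ∈ range (n + 1),
      (∑ p ∈ antidiagonal m, c p.1 * d p.2) • (coeff n) (u ^ m)
        = ∑ p ∈ antidiagonal m, (c p.1 * d p.2) • (coeff n) (u ^ (p.1 + p.2)) := by
    intro m hm
    rw [Finset.sum_smul]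
    exact Finset.sum_congr rfl fun p hp => by rw [Finset.HasAntidiagonal.mem_antidiagonal.mp hp]
  rw [Finset.sum_congr rfl step2]
  -- triangle vs square
  rw [← Finset.sum_biUnion]
  · rw [← Finset.sum_product']
    refine (Finset.sum_subset ?_ ?_).symm
    · intro p hp
      simp only [Finset.mem_biUnion, Finset.mem_range, Finset.HasAntidiagonal.mem_antidiagonal] at hp
      obtain ⟨m, hm, rfl⟩ := hp
      simp only [Finset.mem_product, Finset.mem_range]
      omega
    · intro p _ hp
      simp only [Finset.mem_biUnion, Finset.mem_range, Finset.HasAntidiagonal.mem_antidiagonal] at hp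
      have : n < p.1 + p.2 := by
        by_contra hle
        exact hp ⟨p.1 + p.2, by omega, rfl⟩
      rw [coeff_u_pow_eq_zero L this, smul_zero]
  · intro m₁ h₁ m₂ h₂ hne
    simp only [Finset.disjoint_left]
    intro p hp₁ hp₂
    rw [Finset.HasAntidiagonal.mem_antidiagonal] at hp₁ hp₂
    exact hne (hp₁ ▸ hp₂)

lemma Sop_delta0 (L : ℕ → R) : Sop L (fun ℓ => if ℓ = 0 then 1 else 0) = 1 := by
  ext n
  rw [Sop, coeff_mk]
  rw [Finset.sum_eq_single 0]
  · simp
  · intro b _ hb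
    simp [hb]
  · simp

lemma Sop_delta1 (L : ℕ → R) :
    Sop L (fun ℓ => if ℓ = 1 then 1 else 0) = X * PowerSeries.mk L := by
  ext n
  rw [Sop, coeff_mk]
  cases n with
  | zero =>
    simp [coeff_zero_eq_constantCoeff]
  | succ m =>
    rw [Finset.sum_eq_single 1]
    · simp
    · intro b _ hb
      simp [hb]
    · intro h
      exact absurd (Finset.mem_range.mpr (by omega)) h

lemma conv_CB (m : ℕ) :
    ∑ p ∈ antidiagonal m,
        (1 / ((p.1 + 1).factorial : ℚ)) * (bernoulli p.2 / (p.2.factorial : ℚ))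
      = if m = 0 then 1 else 0 := by
  have key : ∀ k ∈ range (m + 1),
      (1 / (((m - k) + 1).factorial : ℚ)) * (bernoulli k / (k.factorial : ℚ))
        = (((m + 1).choose k : ℚ) * bernoulli k) * (1 / ((m + 1).factorial : ℚ)) := by
    intro k hk
    have hk' : k ≤ m := by simpa [Nat.lt_succ_iff] using hk
    have hch : ((m + 1).choose k) * k.factorial * ((m - k) + 1).factorial
        = (m + 1).factorial := by
      have := Nat.choose_mul_factorial_mul_factorial (Nat.le_succ_of_le hk')
      rwa [Nat.succ_sub hk'] at this
    have hq : (((m + 1).choose k : ℚ)) * (k.factorial : ℚ) * (((m - k) + 1).factorial : ℚ)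
        = ((m + 1).factorial : ℚ) := by exact_mod_cast congrArg (Nat.cast : ℕ → ℚ) hch
    have h1 : ((k.factorial : ℚ)) ≠ 0 := Nat.cast_ne_zero.mpr k.factorial_ne_zero
    have h2 : ((((m - k) + 1).factorial : ℚ)) ≠ 0 :=
      Nat.cast_ne_zero.mpr (Nat.factorial_ne_zero _)
    have h3 : (((m + 1).factorial : ℚ)) ≠ 0 :=
      Nat.cast_ne_zero.mpr (Nat.factorial_ne_zero _)
    have h5 : (1 : ℚ) / ((((m - k) + 1).factorial : ℚ) * (k.factorial : ℚ))
        = (((m + 1).choose k : ℚ)) / (((m + 1).factorial : ℚ)) := by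
      rw [div_eq_div_iff (mul_ne_zero h2 h1) h3]
      linear_combination -hq
    calc (1 / (((m - k) + 1).factorial : ℚ)) * (bernoulli k / (k.factorial : ℚ))
        = bernoulli k * ((1 : ℚ) / ((((m - k) + 1).factorial : ℚ) * (k.factorial : ℚ))) := by
          ring
      _ = bernoulli k * ((((m + 1).choose k : ℚ)) / (((m + 1).factorial : ℚ))) := by rw [h5]
      _ = (((m + 1).choose k : ℚ) * bernoulli k) * (1 / ((m + 1).factorial : ℚ)) := by ring
  calc ∑ p ∈ antidiagonal m,
        (1 / ((p.1 + 1).factorial : ℚ)) * (bernoulli p.2 / (p.2.factorial : ℚ))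
      = ∑ k ∈ range (m + 1),
          (1 / (((m - k) + 1).factorial : ℚ)) * (bernoulli k / (k.factorial : ℚ)) := by
        rw [← Finset.HasAntidiagonal.map_swap_antidiagonal, Finset.sum_map,
          Finset.Nat.sum_antidiagonal_eq_sum_range_succ_mk]
        simp only [Function.Embedding.coeFn_mk, Prod.swap_prod_mk]
    _ = ∑ k ∈ range (m + 1), (((m + 1).choose k : ℚ) * bernoulli k) * (1 / ((m + 1).factorial : ℚ)) :=
        Finset.sum_congr rfl key
    _ = (∑ k ∈ range (m + 1), ((m + 1).choose k : ℚ) * bernoulli k) * (1 / ((m + 1).factorial : ℚ)) := by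
        rw [Finset.sum_mul]
    _ = if m = 0 then 1 else 0 := by
        rw [sum_bernoulli]
        cases m with
        | zero => norm_num
        | succ m' => simp


section Main

variable {R : Type*} [Ring R] [Algebra ℚ R]

lemma range_succ_eq_insert (n : ℕ) : range (n + 1) = insert 0 (Icc 1 n) := by
  ext x
  simp only [Finset.mem_range, Finset.mem_insert, Finset.mem_Icc]
  omega

lemma u_pow_eq (L : ℕ → R) (a : ℕ) :
    (X * PowerSeries.mk L) ^ a = X ^ a * (PowerSeries.mk L) ^ a :=
  ((commute_X (PowerSeries.mk L)).symm).mul_pow a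

lemma coeff_u_pow (L : ℕ → R) {a n : ℕ} (h : a ≤ n) :
    (coeff n) ((X * PowerSeries.mk L) ^ a) = (coeff (n - a)) ((PowerSeries.mk L) ^ a) := by
  rw [u_pow_eq, coeff_X_pow_mul', if_pos h]

end Main

end Stmt1Aux

open Stmt1Aux in
/-- Inverse relation between the modified generator coefficients `L_n` and the one-step
expansion coefficients `A_n` in a (possibly noncommutative) `ℚ`-algebra: if
`L_n = A_{n+1} + ∑_{ℓ=1}^n (B_ℓ/ℓ!) ∑_{n_1+⋯+n_{ℓ+1}=n-ℓ} L_{n_1}⋯L_{n_ℓ} A_{n_{ℓ+1}+1}`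
(`B_ℓ` the Bernoulli numbers with `B_1 = -1/2`), then for all `n ≥ 1`,
`A_n = ∑_{ℓ=1}^n (1/ℓ!) ∑_{n_1+⋯+n_ℓ=n-ℓ} L_{n_1}⋯L_{n_ℓ}`. -/
theorem stmt1 {R : Type*} [Ring R] [Algebra ℚ R] (L : ℕ → R) (A : ℕ → R)
    (hrec : ∀ n : ℕ, L n = A (n + 1) +
      ∑ ℓ ∈ Finset.Icc 1 n, (bernoulli ℓ / (Nat.factorial ℓ : ℚ)) •
        ∑ t ∈ Finset.Nat.antidiagonalTuple (ℓ + 1) (n - ℓ),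
          (List.ofFn fun i : Fin ℓ => L (t i.castSucc)).prod * A (t (Fin.last ℓ) + 1)) :
    ∀ n : ℕ, 1 ≤ n →
      A n = ∑ ℓ ∈ Finset.Icc 1 n, ((1 : ℚ) / (Nat.factorial ℓ : ℚ)) •
        ∑ t ∈ Finset.Nat.antidiagonalTuple ℓ (n - ℓ),
          (List.ofFn fun i : Fin ℓ => L (t i)).prod := by
  classical
  set FA : R⟦X⟧ := PowerSeries.mk fun k => A (k + 1) with hFAdef
  set u : R⟦X⟧ := X * PowerSeries.mk L with hudef
  set cB : ℕ → ℚ := fun ℓ => bernoulli ℓ / (ℓ.factorial : ℚ) with hcB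
  set cC : ℕ → ℚ := fun a => 1 / ((a + 1).factorial : ℚ) with hcC
  -- Step 1: the recursion says `mk L = Sop L cB * FA`.
  have hFL : PowerSeries.mk L = Sop L cB * FA := by
    ext m
    rw [coeff_mk, hrec m]
    have e0 : (coeff m) (Sop L cB * FA)
        = ∑ p ∈ antidiagonal m, (coeff p.1) (Sop L cB) * (coeff p.2) FA := coeff_mul _ _ _
    have e1 : ∀ p ∈ antidiagonal m, (coeff p.1) (Sop L cB) * (coeff p.2) FA
        = ∑ a ∈ range (m + 1), cB a • ((coeff p.1) (u ^ a) * (coeff p.2) FA) := by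
      intro p hp
      have h1 : p.1 < m + 1 := by have := Finset.HasAntidiagonal.mem_antidiagonal.mp hp; omega
      rw [coeff_Sop L cB h1, Finset.sum_mul]
      exact Finset.sum_congr rfl fun a _ => smul_mul_assoc _ _ _
    have e2 : ∀ a ∈ range (m + 1), (coeff m) (u ^ a * FA)
        = ∑ t ∈ Finset.Nat.antidiagonalTuple (a + 1) (m - a),
            (List.ofFn fun i : Fin a => L (t i.castSucc)).prod * A (t (Fin.last a) + 1) := by
      intro a ha
      have ha' : a ≤ m := by simpa [Nat.lt_succ_iff] using ha
      rw [hudef, u_pow_eq, mul_assoc, coeff_X_pow_mul', if_pos ha', hFAdef, coeff_mk_pow_mul]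
    have : (coeff m) (Sop L cB * FA)
        = ∑ a ∈ range (m + 1), cB a • (coeff m) (u ^ a * FA) := by
      rw [e0, Finset.sum_congr rfl e1, Finset.sum_comm]
      refine Finset.sum_congr rfl fun a _ => ?_
      rw [← Finset.smul_sum, ← coeff_mul]
    rw [this, range_succ_eq_insert, Finset.sum_insert (by simp)]
    congr 1
    · rw [e2 0 (Finset.mem_range.mpr (Nat.succ_pos m))]
      simp [hcB]
    · refine Finset.sum_congr rfl fun a ha => ?_
      have ha' := Finset.mem_Icc.mp ha
      rw [e2 a (Finset.mem_range.mpr (by omega))]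
  -- Step 2: invert using the Bernoulli identity.
  have h1 : Sop L cC * Sop L cB = 1 := by
    rw [Sop_mul_Sop]
    have : (fun m => ∑ p ∈ antidiagonal m, cC p.1 * cB p.2)
        = fun ℓ => if ℓ = 0 then (1 : ℚ) else 0 := by
      funext m
      simpa [hcC, hcB] using conv_CB m
    rw [this, Sop_delta0]
  have h2 : X * PowerSeries.mk L = Sop L cB * (X * FA) := by
    rw [hFL, ← mul_assoc, ((commute_X (Sop L cB)).symm).eq, mul_assoc]
  have h3 : X * FA
      = Sop L fun m => ∑ p ∈ antidiagonal m, cC p.1 * (if p.2 = 1 then (1 : ℚ) else 0) := by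
    calc X * FA = 1 * (X * FA) := (one_mul _).symm
      _ = (Sop L cC * Sop L cB) * (X * FA) := by rw [h1]
      _ = Sop L cC * (Sop L cB * (X * FA)) := mul_assoc _ _ _
      _ = Sop L cC * (X * PowerSeries.mk L) := by rw [← h2]
      _ = Sop L cC * Sop L (fun ℓ => if ℓ = 1 then (1 : ℚ) else 0) := by rw [Sop_delta1]
      _ = _ := Sop_mul_Sop _ _ _
  have hconv : (fun m => ∑ p ∈ antidiagonal m, cC p.1 * (if p.2 = 1 then (1 : ℚ) else 0))
      = fun ℓ => if ℓ = 0 then (0 : ℚ) else 1 / (ℓ.factorial : ℚ) := by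
    funext m
    cases m with
    | zero => simp
    | succ m' =>
      rw [Finset.sum_eq_single (m', 1)]
      · simp [hcC]
      · intro p hp hne
        rw [Finset.HasAntidiagonal.mem_antidiagonal] at hp
        have hp2 : p.2 ≠ 1 := by
          rintro h
          exact hne (Prod.ext (by omega) h)
        rw [if_neg hp2, mul_zero]
      · intro h
        exact absurd (Finset.HasAntidiagonal.mem_antidiagonal.mpr (rfl : m' + 1 = m' + 1)) h
  rw [hconv] at h3
  -- Step 3: read off coefficients.
  intro n hn
  obtain ⟨m, rfl⟩ : ∃ m, n = m + 1 := ⟨n - 1, by omega⟩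
  have hA : A (m + 1) = (coeff (m + 1)) (X * FA) := by
    rw [coeff_succ_X_mul, hFAdef, coeff_mk]
  rw [hA, h3, coeff_Sop L _ (Nat.lt_succ_self (m + 1)), range_succ_eq_insert,
    Finset.sum_insert (by simp)]
  rw [if_pos rfl, zero_smul, zero_add]
  refine Finset.sum_congr rfl fun ℓ hℓ => ?_
  have hℓ' : 1 ≤ ℓ ∧ ℓ ≤ m + 1 := Finset.mem_Icc.mp hℓ
  rw [if_neg (by omega), coeff_u_pow L hℓ'.2, coeff_mk_pow]
end

section
/- Let (L_ℓ)_{ℓ≥0} be linear operators and define, for tuples of functions, F_n(t) = ∑_{ℓ=1}^{n} L_ℓ v_{n-ℓ}(t) where v_n solve ∂_t v_n = L_0 v_n + F_n with v_0(0) = φ and v_n(0) = 0 for n ≥ 1. Suppose (μ_m)_{m≥0} satisfy the adjoint recursion ∑_{m=0}^{k} L_m^* μ_{k-m} = 0 for all k ≥ 0, where ⟨L_ℓ v, μ⟩ = ⟨v, L_ℓ^* μ⟩ for a bilinear pairing ⟨·,·⟩. Then for each n, the quantity c_n(t) = ∑_{m=0}^{n} ⟨v_{n-m}(t), μ_m⟩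 is constant in time. -/
lemma tri_sum {M : Type*} [AddCommMonoid M] (n : ℕ) (f : ℕ → ℕ → M) :
    ∑ m ∈ Finset.range (n+1), ∑ ℓ ∈ Finset.range (n-m+1), f m ℓ
      = ∑ j ∈ Finset.range (n+1), ∑ m ∈ Finset.range (j+1), f m (j-m) := by
  rw [Finset.sum_sigma', Finset.sum_sigma']
  refine Finset.sum_nbij' (fun p => ⟨p.1 + p.2, p.1⟩) (fun p => ⟨p.2, p.1 - p.2⟩)
    ?_ ?_ ?_ ?_ ?_
  · rintro ⟨a, b⟩ h
    simp only [Finset.mem_sigma, Finset.mem_range] at h ⊢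
    omega
  · rintro ⟨a, b⟩ h
    simp only [Finset.mem_sigma, Finset.mem_range] at h ⊢
    omega
  · rintro ⟨a, b⟩ h
    simp only [Finset.mem_sigma, Finset.mem_range] at h
    simp only [Sigma.mk.inj_iff]
    exact ⟨trivial, heq_of_eq (by omega)⟩
  · rintro ⟨a, b⟩ h
    simp only [Finset.mem_sigma, Finset.mem_range] at h
    simp only [Sigma.mk.inj_iff]
    exact ⟨by omega, HEq.rfl⟩
  · rintro ⟨a, b⟩ h
    simp only [Finset.mem_sigma, Finset.mem_range] at h
    have : a + b - a = b := by omega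
    simp [this]

/-- Conservation law for the correctors: if the curves `v_n` solve
`∂_t v_n = L_0 v_n + ∑_{ℓ=1}^n L_ℓ v_{n-ℓ}` (differentiation being valid under the pairing
`⟨·,·⟩ = B`), the operators `L_ℓ*` are adjoint to `L_ℓ` with respect to `B`, and the `μ_m`
satisfy the adjoint recursion `∑_{m=0}^k L_m* μ_{k-m} = 0` for all `k`, then
`c_n(t) = ∑_{m=0}^n ⟨v_{n-m}(t), μ_m⟩` is constant in time. -/
theorem stmt5 {V W : Type*} [AddCommGroup V] [Module ℝ V] [AddCommGroup W] [Module ℝ W]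
    (B : V →ₗ[ℝ] W →ₗ[ℝ] ℝ) (L : ℕ → V →ₗ[ℝ] V) (Lstar : ℕ → W →ₗ[ℝ] W)
    (v : ℕ → ℝ → V) (μ : ℕ → W)
    (hadj : ∀ ℓ (x : V) (y : W), B (L ℓ x) y = B x (Lstar ℓ y))
    (hrec : ∀ k : ℕ, ∑ m ∈ Finset.range (k + 1), Lstar m (μ (k - m)) = 0)
    (hderiv : ∀ n m t, HasDerivAt (fun s => B (v n s) (μ m))
      (B (∑ ℓ ∈ Finset.range (n + 1), L ℓ (v (n - ℓ) t)) (μ m)) t) :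
    ∀ n : ℕ, ∀ t : ℝ,
      ∑ m ∈ Finset.range (n + 1), B (v (n - m) t) (μ m) =
      ∑ m ∈ Finset.range (n + 1), B (v (n - m) 0) (μ m) := by
  intro n t
  have key : ∀ s : ℝ,
      HasDerivAt (fun u => ∑ m ∈ Finset.range (n+1), B (v (n - m) u) (μ m)) 0 s := by
    intro s
    have h := HasDerivAt.fun_sum (fun m (_ : m ∈ Finset.range (n+1)) => hderiv (n - m) m s)
    convert h using 1
    case e'_4 => rfl
    case e'_5 => rfl
    have step : ∀ m ∈ Finset.range (n+1),
        B (∑ ℓ ∈ Finset.range (n - m + 1), L ℓ (v (n - m - ℓ) s)) (μ m)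
          = ∑ ℓ ∈ Finset.range (n - m + 1), B (v (n - m - ℓ) s) (Lstar ℓ (μ m)) := by
      intro m _
      rw [map_sum, LinearMap.coe_sum, Finset.sum_apply]
      exact Finset.sum_congr rfl fun ℓ _ => hadj ℓ _ _
    rw [Finset.sum_congr rfl step,
      tri_sum n (fun m ℓ => B (v (n - m - ℓ) s) (Lstar ℓ (μ m)))]
    symm
    apply Finset.sum_eq_zero
    intro j hj
    simp only [Finset.mem_range] at hj
    have e1 : ∀ m ∈ Finset.range (j+1),
        B (v (n - m - (j - m)) s) (Lstar (j - m) (μ m)) =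
        B (v (n - j) s) (Lstar (j - m) (μ m)) := by
      intro m hm
      simp only [Finset.mem_range] at hm
      have : n - m - (j - m) = n - j := by omega
      rw [this]
    rw [Finset.sum_congr rfl e1, ← map_sum]
    have e2 : ∑ m ∈ Finset.range (j+1), Lstar (j - m) (μ m) = 0 := by
      have h0 := hrec j
      rw [← Finset.sum_range_reflect] at h0
      calc ∑ m ∈ Finset.range (j+1), Lstar (j - m) (μ m)
          = ∑ m ∈ Finset.range (j+1), Lstar (j + 1 - 1 - m) (μ (j - (j + 1 - 1 - m))) := by
            apply Finset.sum_congr rfl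
            intro m hm
            simp only [Finset.mem_range] at hm
            have h1 : j + 1 - 1 - m = j - m := by omega
            have h2 : j - (j - m) = m := by omega
            rw [h1, h2]
        _ = 0 := h0
    rw [e2, map_zero]
  have hdiff : Differentiable ℝ
      (fun u => ∑ m ∈ Finset.range (n+1), B (v (n - m) u) (μ m)) :=
    fun s => (key s).differentiableAt
  exact is_const_of_deriv_eq_zero hdiff (fun s => (key s).deriv) t 0
end

section
/- Suppose for each n ≥ 0 there are real sequences with: a_0(t) ≤ P_0(t)e^{-λt}·K and, recursively, a_n(t) ≤ ∑_{m=1}^{n} c_m · a_{n-m}(t) + ∫_0^t p(t-s) e^{-λ(t-s)} (∑_{ℓ=0}^{n-1} C_ℓ a_ℓ(s)) ds · K for nonnegative functions a_n, constants c_m, C_ℓ ≥ 0, polynomials P_0, p with nonnegative coefficients, λ > 0 and K ≥ 0. Then for each n there exists a polynomial P_n with nonnegative coefficients such that a_n(t) ≤ P_n(t) e^{-λt} K for all t ≥ 0. -/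
private lemma evalNN {P : Polynomial ℝ} (h : ∀ i, 0 ≤ P.coeff i) {x : ℝ} (hx : 0 ≤ x) :
    0 ≤ P.eval x := by
  rw [Polynomial.eval_eq_sum_range]
  exact Finset.sum_nonneg fun i _ => mul_nonneg (h i) (pow_nonneg hx i)

private lemma evalMono {P : Polynomial ℝ} (h : ∀ i, 0 ≤ P.coeff i) {x y : ℝ}
    (hx : 0 ≤ x) (hxy : x ≤ y) : P.eval x ≤ P.eval y := by
  rw [Polynomial.eval_eq_sum_range, Polynomial.eval_eq_sum_range]
  exact Finset.sum_le_sum fun i _ =>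
    mul_le_mul_of_nonneg_left (pow_le_pow_left₀ hx hxy i) (h i)

private lemma coeffMulNN {P Q : Polynomial ℝ} (hP : ∀ i, 0 ≤ P.coeff i)
    (hQ : ∀ i, 0 ≤ Q.coeff i) : ∀ i, 0 ≤ (P * Q).coeff i := by
  intro i
  rw [Polynomial.coeff_mul]
  exact Finset.sum_nonneg fun x _ => mul_nonneg (hP x.1) (hQ x.2)

/-- Propagation of exponential decay through the recursion of Proposition 4.2: if
`a_0(t) ≤ P_0(t) e^{-λt} K` and recursively
`a_n(t) ≤ ∑_{m=1}^n c_m a_{n-m}(t) + (∫_0^t p(t-s) e^{-λ(t-s)} ∑_{ℓ=0}^{n-1} C_ℓ a_ℓ(s) ds) K`,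
with nonnegative measurable functions `a_n`, nonnegative constants `c_m, C_ℓ`, polynomials
`P_0, p` with nonnegative coefficients, `λ > 0`, `K ≥ 0`, then every `a_n` satisfies
`a_n(t) ≤ P_n(t) e^{-λt} K` for some polynomial `P_n` with nonnegative coefficients. -/
theorem stmt10 (lam K : ℝ) (hlam : 0 < lam) (hK : 0 ≤ K)
    (P0 p : Polynomial ℝ) (hP0 : ∀ i, 0 ≤ P0.coeff i) (hp : ∀ i, 0 ≤ p.coeff i)
    (a : ℕ → ℝ → ℝ) (c C : ℕ → ℝ)
    (ha_nonneg : ∀ n t, 0 ≤ a n t) (ha_meas : ∀ n, Measurable (a n))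
    (hc : ∀ m, 0 ≤ c m) (hC : ∀ ℓ, 0 ≤ C ℓ)
    (h0 : ∀ t : ℝ, 0 ≤ t → a 0 t ≤ P0.eval t * Real.exp (-lam * t) * K)
    (hrec : ∀ n : ℕ, 1 ≤ n → ∀ t : ℝ, 0 ≤ t →
      a n t ≤ (∑ m ∈ Finset.Icc 1 n, c m * a (n - m) t) +
        (∫ s in (0 : ℝ)..t, p.eval (t - s) * Real.exp (-lam * (t - s)) *
          (∑ ℓ ∈ Finset.range n, C ℓ * a ℓ s)) * K) :
    ∀ n : ℕ, ∃ P : Polynomial ℝ, (∀ i, 0 ≤ P.coeff i) ∧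
      ∀ t : ℝ, 0 ≤ t → a n t ≤ P.eval t * Real.exp (-lam * t) * K := by
  intro n
  induction n using Nat.strong_induction_on with
  | _ n ih =>
    rcases Nat.eq_zero_or_pos n with rfl | hn1
    · exact ⟨P0, hP0, h0⟩
    -- choose polynomials for smaller indices
    set Q : ℕ → Polynomial ℝ := fun m => if h : m < n then (ih m h).choose else 0 with hQdef
    have hQnn : ∀ m, ∀ i, 0 ≤ (Q m).coeff i := by
      intro m i
      by_cases h : m < n
      · simpa [hQdef, h] using (ih m h).choose_spec.1 i
      · simp [hQdef, h]
    have hQb : ∀ m, m < n → ∀ t : ℝ, 0 ≤ t →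
        a m t ≤ (Q m).eval t * Real.exp (-lam * t) * K := by
      intro m h
      simpa [hQdef, h] using (ih m h).choose_spec.2
    refine ⟨(∑ m ∈ Finset.Icc 1 n, c m • Q (n - m)) +
        K • (Polynomial.X * p * ∑ ℓ ∈ Finset.range n, C ℓ • Q ℓ), ?_, ?_⟩
    · intro i
      have h1 : ∀ i, 0 ≤ (∑ m ∈ Finset.Icc 1 n, c m • Q (n - m)).coeff i := by
        intro i
        rw [Polynomial.finset_sum_coeff]
        exact Finset.sum_nonneg fun m _ => by
          simpa [Polynomial.coeff_smul] using mul_nonneg (hc m) (hQnn (n - m) i)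
      have h2 : ∀ i, 0 ≤ (Polynomial.X * p * ∑ ℓ ∈ Finset.range n, C ℓ • Q ℓ : Polynomial ℝ).coeff i := by
        apply coeffMulNN (coeffMulNN (fun i => ?_) hp)
        · intro i
          rw [Polynomial.finset_sum_coeff]
          exact Finset.sum_nonneg fun ℓ _ => by
            simpa [Polynomial.coeff_smul] using mul_nonneg (hC ℓ) (hQnn ℓ i)
        · rw [Polynomial.coeff_X]
          split <;> norm_num
      simpa [Polynomial.coeff_smul] using
        add_nonneg (h1 i) (mul_nonneg hK (h2 i))
    · intro t ht
      set E := Real.exp (-lam * t) with hE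
      have hE0 : 0 ≤ E := le_of_lt (Real.exp_pos _)
      set qt := ∑ ℓ ∈ Finset.range n, C ℓ * (Q ℓ).eval t with hqt
      have hqt0 : 0 ≤ qt :=
        Finset.sum_nonneg fun ℓ _ => mul_nonneg (hC ℓ) (evalNN (hQnn ℓ) ht)
      have hpt0 : 0 ≤ p.eval t := evalNN hp ht
      set M := p.eval t * qt * E * K with hM
      have hM0 : 0 ≤ M := mul_nonneg (mul_nonneg (mul_nonneg hpt0 hqt0) hE0) hK
      set g : ℝ → ℝ := fun s => p.eval (t - s) * Real.exp (-lam * (t - s)) *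
          (∑ ℓ ∈ Finset.range n, C ℓ * a ℓ s) with hg
      -- pointwise bound for g on [0, t]
      have hgb : ∀ s ∈ Set.Icc (0:ℝ) t, g s ≤ M := by
        intro s hs
        obtain ⟨hs0, hst⟩ := hs
        have hts0 : 0 ≤ t - s := by linarith
        have h1 : p.eval (t - s) ≤ p.eval t := evalMono hp hts0 (by linarith)
        have h2 : (∑ ℓ ∈ Finset.range n, C ℓ * a ℓ s) ≤ qt * Real.exp (-lam * s) * K := by
          rw [hqt, Finset.sum_mul, Finset.sum_mul]
          refine Finset.sum_le_sum fun ℓ hℓ => ?_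
          have hb := hQb ℓ (Finset.mem_range.mp hℓ) s hs0
          have hb2 : (Q ℓ).eval s ≤ (Q ℓ).eval t := evalMono (hQnn ℓ) hs0 hst
          have he0 : (0:ℝ) ≤ Real.exp (-lam * s) := (Real.exp_pos _).le
          calc C ℓ * a ℓ s ≤ C ℓ * ((Q ℓ).eval s * Real.exp (-lam * s) * K) :=
                mul_le_mul_of_nonneg_left hb (hC ℓ)
            _ ≤ C ℓ * ((Q ℓ).eval t * Real.exp (-lam * s) * K) := by
                apply mul_le_mul_of_nonneg_left _ (hC ℓ)
                exact mul_le_mul_of_nonneg_right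
                  (mul_le_mul_of_nonneg_right hb2 he0) hK
            _ = C ℓ * (Q ℓ).eval t * Real.exp (-lam * s) * K := by ring
        have hsum0 : 0 ≤ ∑ ℓ ∈ Finset.range n, C ℓ * a ℓ s :=
          Finset.sum_nonneg fun ℓ _ => mul_nonneg (hC ℓ) (ha_nonneg ℓ s)
        have hexp : Real.exp (-lam * (t - s)) * Real.exp (-lam * s) = E := by
          rw [hE, ← Real.exp_add]; ring_nf
        calc g s ≤ p.eval t * Real.exp (-lam * (t - s)) *
              (∑ ℓ ∈ Finset.range n, C ℓ * a ℓ s) := by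
              apply mul_le_mul_of_nonneg_right _ hsum0
              exact mul_le_mul_of_nonneg_right h1 (Real.exp_pos _).le
          _ ≤ p.eval t * Real.exp (-lam * (t - s)) * (qt * Real.exp (-lam * s) * K) := by
              apply mul_le_mul_of_nonneg_left h2
              exact mul_nonneg hpt0 (Real.exp_pos _).le
          _ = p.eval t * qt * (Real.exp (-lam * (t - s)) * Real.exp (-lam * s)) * K := by
              ring
          _ = M := by rw [hexp, hM]
      have hg0 : ∀ s ∈ Set.Icc (0:ℝ) t, 0 ≤ g s := by
        intro s hs
        exact mul_nonneg (mul_nonneg (evalNN hp (by linarith [hs.2])) (Real.exp_pos _).le)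
          (Finset.sum_nonneg fun ℓ _ => mul_nonneg (hC ℓ) (ha_nonneg ℓ s))
      have hgmeas : Measurable g := by
        apply Measurable.mul
        · apply Measurable.mul
          · exact (p.continuous_aeval.comp (continuous_const.sub continuous_id)).measurable
          · exact (Real.continuous_exp.comp
              (continuous_const.mul (continuous_const.sub continuous_id))).measurable
        · exact Finset.measurable_sum _ fun ℓ _ => (measurable_const.mul (ha_meas ℓ))
      have hgint : IntervalIntegrable g MeasureTheory.volume 0 t := by
        rw [intervalIntegrable_iff_integrableOn_Ioc_of_le ht]
        apply MeasureTheory.Integrable.mono'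
          (MeasureTheory.integrableOn_const measure_Ioc_lt_top.ne (by simp) :
            MeasureTheory.IntegrableOn (fun _ => M) (Set.Ioc 0 t) MeasureTheory.volume)
          hgmeas.aestronglyMeasurable
        refine (MeasureTheory.ae_restrict_iff' measurableSet_Ioc).2
          (MeasureTheory.ae_of_all _ fun s hs => ?_)
        have hs' : s ∈ Set.Icc (0:ℝ) t := ⟨hs.1.le, hs.2⟩
        rw [Real.norm_eq_abs, abs_of_nonneg (hg0 s hs')]
        exact hgb s hs'
      have hI : (∫ s in (0:ℝ)..t, g s) ≤ t * M := by
        have h2 := intervalIntegral.integral_mono_on ht hgint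
          (intervalIntegrable_const (c := M)) (fun s hs => hgb s hs)
        rwa [intervalIntegral.integral_const, smul_eq_mul, sub_zero] at h2
      have hS : (∑ m ∈ Finset.Icc 1 n, c m * a (n - m) t) ≤
          (∑ m ∈ Finset.Icc 1 n, c m * (Q (n - m)).eval t) * E * K := by
        rw [Finset.sum_mul, Finset.sum_mul]
        refine Finset.sum_le_sum fun m hm => ?_
        have hmn : n - m < n := Nat.sub_lt hn1 (Finset.mem_Icc.mp hm).1
        calc c m * a (n - m) t ≤ c m * ((Q (n - m)).eval t * E * K) :=
              mul_le_mul_of_nonneg_left (hQb (n - m) hmn t ht) (hc m)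
          _ = c m * (Q (n - m)).eval t * E * K := by ring
      have hmain := hrec n hn1 t ht
      have hIK : (∫ s in (0:ℝ)..t, g s) * K ≤ t * M * K :=
        mul_le_mul_of_nonneg_right hI hK
      have heval : ((∑ m ∈ Finset.Icc 1 n, c m • Q (n - m)) +
          K • (Polynomial.X * p * ∑ ℓ ∈ Finset.range n, C ℓ • Q ℓ)).eval t =
          (∑ m ∈ Finset.Icc 1 n, c m * (Q (n - m)).eval t) + K * (t * (p.eval t * qt)) := by
        simp [Polynomial.eval_finset_sum, hqt, Finset.mul_sum]
        exact Finset.sum_congr rfl fun i _ => by ring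
      rw [heval]
      have : t * M * K = K * (t * (p.eval t * qt)) * E * K := by rw [hM]; ring
      rw [this] at hIK
      calc a n t ≤ (∑ m ∈ Finset.Icc 1 n, c m * a (n - m) t) +
            (∫ s in (0:ℝ)..t, g s) * K := hmain
        _ ≤ (∑ m ∈ Finset.Icc 1 n, c m * (Q (n - m)).eval t) * E * K +
            K * (t * (p.eval t * qt)) * E * K := add_le_add hS hIK
        _ = ((∑ m ∈ Finset.Icc 1 n, c m * (Q (n - m)).eval t) +
            K * (t * (p.eval t * qt))) * E * K := by ring
end
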